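/- Beurling-type estimate for fixed times: there is a constant c such that for any continuous curve γ: [0,∞) → C with |γ(0)| = r and |γ(t)| → ∞, and any starting point z with |z| ≤ r, a standard planar Brownian motion B started at z satisfies P^z{B[0,t] ∩ γ[0,∞) = ∅} ≤ c (r/√t)^{1/2}, assuming the corresponding estimate holds when the fixed time t is replaced by the exit time σ_t = inf{s : |B_s| = √t}. -/

import Mathlib

open MeasureTheory ProbabilityTheory

/-- `W` is a standard one-dimensional Brownian motion. -/
def IsStandardBM {Ω : Type*} [MeasurableSpace Ω] (μ : Measure Ω)
    (W : ℝ → Ω → ℝ) : Prop :=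
  (∀ t : ℝ, Measurable (W t))
  ∧ (∀ ω, W 0 ω = 0)
  ∧ (∀ ω, Continuous fun t => W t ω)
  ∧ (∀ s t : ℝ, 0 ≤ s → s ≤ t →
      μ.map (fun ω => W t ω - W s ω) = gaussianReal 0 (Real.toNNReal (t - s)))
  ∧ (∀ (k : ℕ) (t : Fin (k + 1) → ℝ), Monotone t → (∀ i, 0 ≤ t i) →
      iIndepFun
        (fun (i : Fin k) ω => W (t i.succ) ω - W (t i.castSucc) ω) μ)

/-- `B` is a standard planar Brownian motion: its real and imaginary parts (relative to
the starting point) are independent standard one-dimensional Brownian motions. -/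
def IsPlanarBM {Ω : Type*} [MeasurableSpace Ω] (μ : Measure Ω)
    (B : ℝ → Ω → ℂ) : Prop :=
  IsStandardBM μ (fun t ω => (B t ω - B 0 ω).re)
  ∧ IsStandardBM μ (fun t ω => (B t ω - B 0 ω).im)
  ∧ Indep
      (⨆ t : ℝ, MeasurableSpace.comap (fun ω => (B t ω - B 0 ω).re) inferInstance)
      (⨆ t : ℝ, MeasurableSpace.comap (fun ω => (B t ω - B 0 ω).im) inferInstance) μ

/-- The hitting time of the circle of radius `√t` by the path `B · ω`. -/
noncomputable def sigmaT {Ω : Type*} (B : ℝ → Ω → ℂ) (t : ℝ) (ω : Ω) : ℝ :=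
  sInf {s : ℝ | 0 ≤ s ∧ ‖B s ω‖ = Real.sqrt t}

open MeasureTheory ProbabilityTheory Set Filter Topology NNReal

section Aux

variable {Ω : Type} [m0 : MeasurableSpace Ω] {μ : Measure Ω} {B : ℝ → Ω → ℂ} {z : ℂ}

/-- image of `[0,∞)` under a proper continuous curve is closed -/
lemma closed_range_aux {γ : ℝ → ℂ} (hγ : Continuous γ)
    (htend : Tendsto (fun s => ‖γ s‖) atTop atTop) :
    IsClosed (range fun s => γ (max s 0)) := by
  rw [← isSeqClosed_iff_isClosed]
  intro x p hx hp
  -- each x n = γ (a n) with a n ≥ 0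
  have hx' : ∀ n, ∃ a : ℝ, 0 ≤ a ∧ γ a = x n := by
    intro n
    obtain ⟨s, hs⟩ := hx n
    exact ⟨max s 0, le_max_right _ _, hs⟩
  choose a ha hγa using hx'
  -- a n is eventually bounded
  obtain ⟨M, hM⟩ := (tendsto_atTop.mp htend (‖p‖ + 1)).exists_forall_of_atTop
  have habs : Tendsto (fun n => ‖x n‖) atTop (𝓝 (‖p‖)) :=
    (continuous_norm.tendsto p).comp hp
  have hev : ∀ᶠ n in atTop, a n ≤ M := by
    filter_upwards [habs.eventually_lt_const (by linarith : ‖p‖ < ‖p‖ + 1)]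
      with n hn
    by_contra hM'
    push_neg at hM'
    have := hM (a n) hM'.le
    rw [hγa] at this
    linarith
  obtain ⟨N, hN⟩ := eventually_atTop.mp hev
  -- Bolzano-Weierstrass on [0, M]
  have hmem : ∀ n, a (n + N) ∈ Icc (0:ℝ) M := fun n => ⟨ha _, hN _ (by omega)⟩
  obtain ⟨l, hl, φ, hφ, hlim⟩ :=
    tendsto_subseq_of_bounded (Metric.isBounded_Icc 0 M) hmem
  have h1 : Tendsto (fun n => γ (a (φ n + N))) atTop (𝓝 (γ l)) :=
    (hγ.tendsto l).comp hlim
  have h2 : Tendsto (fun n => γ (a (φ n + N))) atTop (𝓝 p) := by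
    have : Tendsto (fun n => x (φ n + N)) atTop (𝓝 p) :=
      hp.comp ((tendsto_add_atTop_nat N).comp hφ.tendsto_atTop)
    simpa [hγa] using this
  have hγl : γ l = p := tendsto_nhds_unique h1 h2
  have hl0 : 0 ≤ l := by rw [isClosed_Icc.closure_eq] at hl; exact hl.1
  exact ⟨l, by simp only [sup_eq_left.mpr hl0, hγl]⟩

/-- pathwise continuity of planar BM -/
lemma path_cont_aux (hB : IsPlanarBM μ B) (hB0 : ∀ ω, B 0 ω = z) (ω : Ω) :
    Continuous fun s => B s ω := by
  have h : (fun s => B s ω)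
      = fun s => ((((B s ω - B 0 ω).re : ℝ) : ℂ) + ((B s ω - B 0 ω).im : ℝ) * Complex.I) + z := by
    funext s
    rw [Complex.re_add_im, hB0]
    ring
  rw [h]
  exact ((Complex.continuous_ofReal.comp (hB.1.2.2.1 ω)).add
    ((Complex.continuous_ofReal.comp (hB.2.1.2.2.1 ω)).mul continuous_const)).add
    continuous_const

/-- interval mass bound for the gaussian -/
lemma gaussian_interval_aux {v : ℝ≥0} (hv : v ≠ 0) (c : ℝ) :
    gaussianReal 0 v (Set.Ioo (-c) c)
      ≤ ENNReal.ofReal ((Real.sqrt (2 * Real.pi * v))⁻¹ * (2 * c)) := by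
  rw [gaussianReal_apply _ hv]
  have hb : ∀ x : ℝ, gaussianPDF 0 v x ≤ ENNReal.ofReal ((Real.sqrt (2 * Real.pi * v))⁻¹) := by
    intro x
    rw [gaussianPDF]
    apply ENNReal.ofReal_le_ofReal
    rw [gaussianPDFReal]
    calc (Real.sqrt (2 * Real.pi * v))⁻¹ * Real.exp (-(x - 0) ^ 2 / (2 * v))
        ≤ (Real.sqrt (2 * Real.pi * v))⁻¹ * 1 := by
          apply mul_le_mul_of_nonneg_left _ (by positivity)
          apply Real.exp_le_one_iff.mpr
          apply div_nonpos_of_nonpos_of_nonneg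
          · simp [sq_nonneg]
          · positivity
      _ = _ := mul_one _
  calc ∫⁻ x in Set.Ioo (-c) c, gaussianPDF 0 v x
      ≤ ∫⁻ _ in Set.Ioo (-c) c, ENNReal.ofReal ((Real.sqrt (2 * Real.pi * v))⁻¹) :=
        lintegral_mono fun x => hb x
    _ = ENNReal.ofReal ((Real.sqrt (2 * Real.pi * v))⁻¹) * volume (Set.Ioo (-c) c) := by
        rw [MeasureTheory.setLIntegral_const]
    _ ≤ ENNReal.ofReal ((Real.sqrt (2 * Real.pi * v))⁻¹) * ENNReal.ofReal (2 * c) := by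
        gcongr
        rw [Real.volume_Ioo]
        apply ENNReal.ofReal_le_ofReal
        ring_nf
        exact le_refl _
    _ = _ := by
        rw [← ENNReal.ofReal_mul (by positivity)]

end Aux

section IndepAux

open MeasurableSpace

variable {Ω : Type} [m0 : MeasurableSpace Ω] {μ : Measure Ω} {W : ℝ → Ω → ℝ}
  {B : ℝ → Ω → ℂ} {z : ℂ}

private lemma raise_meas {mx my : MeasurableSpace Ω} (h : mx ≤ my) {s : Set Ω}
    (hs : MeasurableSet[mx] s) : MeasurableSet[my] s := h _ hs

/-- grid positions before `T'` are independent of the increment from `T'` to `T` -/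
lemma level_indep_aux (hW : IsStandardBM μ W) {T' T : ℝ} (hT'0 : 0 ≤ T') (hTT : T' ≤ T)
    (m : ℕ) :
    Indep (⨆ j : Fin (2 ^ m + 1),
        MeasurableSpace.comap (W ((j : ℕ) * (T' / 2 ^ m))) inferInstance)
      (MeasurableSpace.comap (fun ω => W T ω - W T' ω) inferInstance) μ := by
  obtain ⟨hmeas, hzero, hcont, hlaw, hind⟩ := hW
  set δ : ℝ := T' / 2 ^ m with hδ
  have hδ0 : 0 ≤ δ := by positivity
  have h2m : ((2:ℝ) ^ m) * δ = T' := by rw [hδ]; field_simp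
  set M : ℕ := 2 ^ m + 1 with hM
  set v : Fin (M + 1) → ℝ := fun i => if (i : ℕ) ≤ 2 ^ m then (i : ℕ) * δ else T with hv
  have hvmono : Monotone v := by
    intro i j hij
    have hij' : (i : ℕ) ≤ (j : ℕ) := hij
    simp only [hv]
    by_cases hj : (j : ℕ) ≤ 2 ^ m
    · rw [if_pos (le_trans hij' hj), if_pos hj]
      exact mul_le_mul_of_nonneg_right (by exact_mod_cast hij') hδ0
    · rw [if_neg hj]
      by_cases hi : (i : ℕ) ≤ 2 ^ m
      · rw [if_pos hi]
        calc ((i:ℕ):ℝ) * δ ≤ (2:ℝ)^m * δ := by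
              exact mul_le_mul_of_nonneg_right (by exact_mod_cast hi) hδ0
          _ = T' := h2m
          _ ≤ T := hTT
      · rw [if_neg hi]
  have hvnn : ∀ i, 0 ≤ v i := by
    intro i; simp only [hv]; split
    · positivity
    · linarith
  have hind' := hind M v hvmono hvnn
  set g : Fin M → Ω → ℝ := fun i ω => W (v i.succ) ω - W (v i.castSucc) ω with hg
  have hgmeas : ∀ i, Measurable (g i) := fun i => (hmeas _).sub (hmeas _)
  have hii : iIndep (fun i => MeasurableSpace.comap (g i) inferInstance) μ := hind'.iIndep
  have hdisj : Disjoint (({Fin.last (2 ^ m)} : Set (Fin M))ᶜ) {Fin.last (2 ^ m)} :=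
    disjoint_compl_left
  have hbig := indep_iSup_of_disjoint (m := fun i => MeasurableSpace.comap (g i) inferInstance)
    (fun i => (hgmeas i).comap_le) hii hdisj
  have hglast : g (Fin.last (2 ^ m)) = fun ω => W T ω - W T' ω := by
    funext ω
    have h1 : v (Fin.last (2 ^ m)).succ = T := by
      simp only [hv, Fin.val_succ, Fin.val_last]
      rw [if_neg (by omega)]
    have h2 : v (Fin.last (2 ^ m)).castSucc = T' := by
      simp only [hv, Fin.coe_castSucc, Fin.val_last]
      rw [if_pos le_rfl, ← h2m]
      norm_num
    simp only [hg]; rw [h1, h2]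
  have hZle : MeasurableSpace.comap (fun ω => W T ω - W T' ω) inferInstance
      ≤ ⨆ i ∈ ({Fin.last (2 ^ m)} : Set (Fin M)),
          MeasurableSpace.comap (g i) inferInstance := by
    rw [← hglast]
    exact le_biSup (fun i : Fin M => MeasurableSpace.comap (g i) inferInstance)
      (Set.mem_singleton _)
  have hkey : ∀ n : ℕ, n ≤ 2 ^ m →
      Measurable[⨆ i ∈ (({Fin.last (2 ^ m)} : Set (Fin M))ᶜ),
        MeasurableSpace.comap (g i) inferInstance] (W ((n : ℝ) * δ)) := by
    intro n
    induction n with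
    | zero =>
      intro _
      have h0 : W ((0 : ℕ) * δ) = fun _ => (0:ℝ) := by
        funext ω
        have : ((0:ℕ):ℝ) * δ = 0 := by norm_num
        rw [this]
        exact hzero ω
      have : ((0:ℕ):ℝ) = (0:ℝ) := by norm_num
      rw [this] at h0 ⊢
      rw [h0]
      exact measurable_const
    | succ n ih =>
      intro h
      have hn : n ≤ 2 ^ m := by omega
      have hfin : n < M := by omega
      have hmem : (⟨n, hfin⟩ : Fin M) ∈ ({Fin.last (2 ^ m)} : Set (Fin M))ᶜ := by
        simp only [Set.mem_compl_iff, Set.mem_singleton_iff]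
        intro hcon
        have : n = 2 ^ m := by simpa [Fin.ext_iff] using hcon
        omega
      have hfun : W (((n+1 : ℕ) : ℝ) * δ) = fun ω => W ((n:ℝ) * δ) ω + g ⟨n, hfin⟩ ω := by
        funext ω
        have h1 : v (⟨n, hfin⟩ : Fin M).succ = ((n+1 : ℕ) : ℝ) * δ := by
          simp only [hv, Fin.succ_mk]
          rw [if_pos h]
        have h2 : v (⟨n, hfin⟩ : Fin M).castSucc = (n : ℝ) * δ := by
          simp only [hv, Fin.castSucc_mk]
          rw [if_pos hn]
        simp only [hg]
        rw [h1, h2]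
        ring
      rw [show (((n+1:ℕ)) : ℝ) = ((n:ℝ) + 1) by push_cast; ring] at hfun
      rw [show ((n+1:ℕ) : ℝ) = ((n:ℝ) + 1) by push_cast; ring]
      rw [hfun]
      exact (ih hn).add (Measurable.of_comap_le
        (le_biSup (fun i : Fin M => MeasurableSpace.comap (g i) inferInstance) hmem))
  have hAle : (⨆ j : Fin (2 ^ m + 1),
      MeasurableSpace.comap (W ((j : ℕ) * (T' / 2 ^ m))) inferInstance)
      ≤ ⨆ i ∈ (({Fin.last (2 ^ m)} : Set (Fin M))ᶜ),
          MeasurableSpace.comap (g i) inferInstance := by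
    apply iSup_le
    intro j
    exact (hkey (j : ℕ) (Nat.lt_succ_iff.mp j.isLt)).comap_le
  exact indep_of_indep_of_le_right (indep_of_indep_of_le_left hbig hAle) hZle

/-- dyadic grid σ-algebras are monotone -/
lemma grid_mono_aux (W : ℝ → Ω → ℝ) (T' : ℝ) :
    Monotone (fun m => ⨆ j : Fin (2 ^ m + 1),
      MeasurableSpace.comap (W ((j : ℕ) * (T' / 2 ^ m))) inferInstance) := by
  apply monotone_nat_of_le_succ
  intro m
  apply iSup_le
  intro j
  have hple : (j : ℕ) ≤ 2 ^ m := Nat.lt_succ_iff.mp j.isLt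
  have hj2 : 2 * (j:ℕ) < 2 ^ (m+1) + 1 := by
    have hp : 2 ^ (m+1) = 2 * 2 ^ m := by ring
    omega
  have heq : ((j:ℕ) : ℝ) * (T' / 2 ^ m)
      = (((⟨2 * (j:ℕ), hj2⟩ : Fin (2 ^ (m+1) + 1)) : ℕ) : ℝ) * (T' / 2 ^ (m+1)) := by
    push_cast
    have h2 : (2:ℝ) ^ (m+1) = 2 * 2 ^ m := by ring
    rw [h2]
    by_cases hT : T' = 0
    · simp [hT]
    · field_simp
  rw [heq]
  exact le_iSup (fun j' : Fin (2 ^ (m+1) + 1) =>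
    MeasurableSpace.comap (W ((j' : ℕ) * (T' / 2 ^ (m+1)))) inferInstance) _

/-- combining with the independent imaginary part -/
lemma combine_indep_aux [IsZeroOrProbabilityMeasure μ]
    {mA mRe mIm mZ : MeasurableSpace Ω}
    (hARe : mA ≤ mRe) (hZRe : mZ ≤ mRe) (hRe : mRe ≤ m0) (hIm : mIm ≤ m0)
    (hAZ : Indep mA mZ μ) (hReIm : Indep mRe mIm μ) :
    Indep (mA ⊔ mIm) mZ μ := by
  have hAm0 : mA ≤ m0 := hARe.trans hRe
  have hZm0 : mZ ≤ m0 := hZRe.trans hRe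
  set p1 : Set (Set Ω) :=
    {s | ∃ a, MeasurableSet[mA] a ∧ ∃ b, MeasurableSet[mIm] b ∧ s = a ∩ b} with hp1
  set p2 : Set (Set Ω) := {s | MeasurableSet[mZ] s} with hp2
  have hgen1 : mA ⊔ mIm = MeasurableSpace.generateFrom p1 := by
    apply le_antisymm
    · apply sup_le
      · intro s hs
        exact MeasurableSpace.measurableSet_generateFrom
          ⟨s, hs, Set.univ, MeasurableSet.univ, (Set.inter_univ s).symm⟩
      · intro s hs
        exact MeasurableSpace.measurableSet_generateFrom
          ⟨Set.univ, MeasurableSet.univ, s, hs, (Set.univ_inter s).symm⟩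
    · apply MeasurableSpace.generateFrom_le
      rintro s ⟨a, ha, b, hb, rfl⟩
      exact (raise_meas le_sup_left ha).inter (raise_meas le_sup_right hb)
  have hgen2 : mZ = MeasurableSpace.generateFrom p2 :=
    (@MeasurableSpace.generateFrom_measurableSet Ω mZ).symm
  have hpi1 : IsPiSystem p1 := by
    rintro s ⟨a, ha, b, hb, rfl⟩ t ⟨a', ha', b', hb', rfl⟩ _
    exact ⟨a ∩ a', ha.inter ha', b ∩ b', hb.inter hb', by
      rw [Set.inter_inter_inter_comm]⟩
  have hpi2 : IsPiSystem p2 := fun s hs t ht _ => MeasurableSet.inter hs ht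
  have hsets : IndepSets p1 p2 μ := by
    rw [IndepSets_iff]
    rintro s1 s2 ⟨a, ha, b, hb, rfl⟩ hs2
    have hReIm' := (Indep_iff _ _ _).mp hReIm
    have hAZ' := (Indep_iff _ _ _).mp hAZ
    have e1 : a ∩ b ∩ s2 = a ∩ s2 ∩ b := by
      ext ω; simp only [Set.mem_inter_iff]; tauto
    rw [e1, hReIm' _ _ ((raise_meas hARe ha).inter (raise_meas hZRe hs2)) hb,
      hAZ' _ _ ha hs2, hReIm' _ _ (raise_meas hARe ha) hb]
    ring
  exact IndepSets.indep (sup_le hAm0 hIm) hZm0 hpi1 hpi2 hgen1 hgen2 hsets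

end IndepAux

section PastAux

open MeasurableSpace Topology

variable {Ω : Type} [m0 : MeasurableSpace Ω] {μ : Measure Ω}
  {B : ℝ → Ω → ℂ} {z : ℂ}

/-- the avoidance event up to time `T'` is independent of `Re (B T - B T')`. -/
lemma indep_past_aux [IsProbabilityMeasure μ]
    (hB : IsPlanarBM μ B) (hB0 : ∀ ω, B 0 ω = z)
    {K : Set ℂ} (hK : IsClosed K) (hKne : K.Nonempty)
    {T' T : ℝ} (hT' : 0 < T') (hTT : T' < T) (c : ℝ) :
    μ ({ω | ∀ s ∈ Set.Icc (0:ℝ) T', B s ω ∉ K} ∩ {ω | |(B T ω - B T' ω).re| < c})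
      = μ {ω | ∀ s ∈ Set.Icc (0:ℝ) T', B s ω ∉ K}
        * μ {ω | |(B T ω - B T' ω).re| < c} := by
  have hcont : ∀ ω, Continuous fun s => B s ω := path_cont_aux hB hB0
  haveI hZPM : IsZeroOrProbabilityMeasure μ := inferInstance
  obtain ⟨hre, him, hri⟩ := hB
  set Wre : ℝ → Ω → ℝ := fun t ω => (B t ω - B 0 ω).re with hWre
  set Wim : ℝ → Ω → ℝ := fun t ω => (B t ω - B 0 ω).im with hWim
  have hmre : ∀ t, Measurable (Wre t) := hre.1
  have hmim : ∀ t, Measurable (Wim t) := him.1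
  set mA : ℕ → MeasurableSpace Ω := fun m => ⨆ j : Fin (2 ^ m + 1),
      MeasurableSpace.comap (Wre ((j : ℕ) * (T' / 2 ^ m))) inferInstance with hmA
  set mAsup := ⨆ m, mA m with hmAsup
  set Gre := ⨆ t : ℝ, MeasurableSpace.comap (Wre t) inferInstance with hGre
  set Gim := ⨆ t : ℝ, MeasurableSpace.comap (Wim t) inferInstance with hGim
  set Z : Ω → ℝ := fun ω => Wre T ω - Wre T' ω with hZ
  set mZ := MeasurableSpace.comap Z inferInstance with hmZ
  have hGre_le : Gre ≤ m0 := iSup_le fun t => (hmre t).comap_le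
  have hGim_le : Gim ≤ m0 := iSup_le fun t => (hmim t).comap_le
  have hA_le_Gre : ∀ m, mA m ≤ Gre := fun m => iSup_le fun j =>
    le_iSup (fun t => MeasurableSpace.comap (Wre t) inferInstance) _
  have hAsup_le_Gre : mAsup ≤ Gre := iSup_le hA_le_Gre
  have hZ_le_Gre : mZ ≤ Gre := by
    have hZm : Measurable[Gre] Z := Measurable.sub
      (Measurable.of_comap_le (le_iSup (fun t => MeasurableSpace.comap (Wre t) inferInstance) T))
      (Measurable.of_comap_le (le_iSup (fun t => MeasurableSpace.comap (Wre t) inferInstance) T'))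
    exact hZm.comap_le
  have hAZ : Indep mAsup mZ μ :=
    indep_iSup_of_monotone (fun m => level_indep_aux (m0 := m0) hre hT'.le hTT.le m)
      (fun m => (hA_le_Gre m).trans hGre_le) (hZ_le_Gre.trans hGre_le) (grid_mono_aux Wre T')
  have hfinal : Indep (mAsup ⊔ Gim) mZ μ :=
    combine_indep_aux (m0 := m0) hAsup_le_Gre hZ_le_Gre hGre_le hGim_le hAZ hri
  -- the increment event is mZ-measurable
  have hZeq : ∀ ω, Z ω = (B T ω - B T' ω).re := by
    intro ω
    simp only [hZ, hWre, Complex.sub_re]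
    ring
  have hZev : MeasurableSet[mZ] {ω | |(B T ω - B T' ω).re| < c} := by
    rw [hmZ]
    apply MeasurableSpace.measurableSet_comap.mpr
    refine ⟨Set.Ioo (-c) c, measurableSet_Ioo, ?_⟩
    ext ω
    simp only [Set.mem_preimage, Set.mem_Ioo, Set.mem_setOf_eq, abs_lt, hZeq]
  -- the avoidance event is measurable w.r.t. the past grid σ-algebra
  have hBmeas : ∀ (m : ℕ) (j : Fin (2^m+1)),
      Measurable[mAsup ⊔ Gim] (fun ω => B ((j:ℕ) * (T'/2^m)) ω) := by
    intro m j
    have h1 : Measurable[mAsup ⊔ Gim] (Wre ((j:ℕ) * (T'/2^m))) := by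
      apply Measurable.of_comap_le
      refine le_trans ?_ (le_trans (le_iSup mA m) le_sup_left)
      exact le_iSup (fun j' : Fin (2^m+1) =>
        MeasurableSpace.comap (Wre (((j':ℕ)) * (T'/2^m))) inferInstance) j
    have h2 : Measurable[mAsup ⊔ Gim] (Wim ((j:ℕ) * (T'/2^m))) := by
      apply Measurable.of_comap_le
      exact le_trans (le_iSup (fun t => MeasurableSpace.comap (Wim t) inferInstance) _)
        le_sup_right
    have heq : (fun ω => B ((j:ℕ) * (T'/2^m)) ω)
        = fun ω => (((Wre ((j:ℕ) * (T'/2^m)) ω : ℝ) : ℂ)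
            + ((Wim ((j:ℕ) * (T'/2^m)) ω : ℝ)) * Complex.I) + z := by
      funext ω
      simp only [hWre, hWim]
      rw [Complex.re_add_im, hB0]
      ring
    rw [heq]
    exact ((Complex.measurable_ofReal.comp h1).add
      ((Complex.measurable_ofReal.comp h2).mul_const Complex.I)).add_const z
  set Gr : ℕ → ℕ → Set Ω := fun n m =>
      {ω | ∀ j : Fin (2^m+1),
        (1:ℝ)/(n+1) ≤ Metric.infDist (B ((j:ℕ) * (T'/2^m)) ω) K} with hGr
  have hGrmeas : ∀ n m, MeasurableSet[mAsup ⊔ Gim] (Gr n m) := by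
    intro n m
    have hrw : Gr n m = ⋂ j : Fin (2^m+1),
        (fun ω => B ((j:ℕ) * (T'/2^m)) ω) ⁻¹' {w | (1:ℝ)/(n+1) ≤ Metric.infDist w K} := by
      ext ω
      simp only [hGr, Set.mem_setOf_eq, Set.mem_iInter, Set.mem_preimage]
    rw [hrw]
    exact MeasurableSet.iInter fun j => (hBmeas m j)
      ((isClosed_le continuous_const (Metric.continuous_infDist_pt K)).measurableSet)
  have hδm : ∀ m : ℕ, (0:ℝ) < T'/2^m := fun m => by positivity
  have hErep : {ω | ∀ s ∈ Set.Icc (0:ℝ) T', B s ω ∉ K} = ⋃ n, ⋂ m, Gr n m := by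
    ext ω
    simp only [Set.mem_setOf_eq, Set.mem_iUnion, Set.mem_iInter, hGr]
    constructor
    · intro hω
      have hfc : Continuous fun s => Metric.infDist (B s ω) K :=
        (Metric.continuous_infDist_pt K).comp (hcont ω)
      obtain ⟨s₀, hs₀, hmin⟩ := isCompact_Icc.exists_isMinOn
        (Set.nonempty_Icc.mpr hT'.le) hfc.continuousOn
      have hq : 0 < Metric.infDist (B s₀ ω) K :=
        (hK.notMem_iff_infDist_pos hKne).mp (hω s₀ hs₀)
      obtain ⟨n, hn⟩ := exists_nat_one_div_lt hq
      refine ⟨n, fun m j => ?_⟩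
      have hjmem : ((j:ℕ) : ℝ) * (T'/2^m) ∈ Set.Icc (0:ℝ) T' := by
        constructor
        · positivity
        · have hj : ((j:ℕ) : ℝ) ≤ 2^m := by exact_mod_cast Nat.lt_succ_iff.mp j.isLt
          calc ((j:ℕ):ℝ) * (T'/2^m) ≤ (2:ℝ)^m * (T'/2^m) :=
                mul_le_mul_of_nonneg_right hj (hδm m).le
            _ = T' := by field_simp
      exact le_trans hn.le (hmin hjmem)
    · rintro ⟨n, hn⟩ s hs hsK
      set jm : ℕ → ℕ := fun m => ⌊s / (T'/2^m)⌋₊ with hjm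
      have hjle : ∀ m, jm m < 2^m + 1 := by
        intro m
        have h1 : s / (T'/2^m) ≤ ((2^m : ℕ) : ℝ) := by
          rw [div_le_iff₀ (hδm m)]
          push_cast
          calc s ≤ T' := hs.2
            _ = 2^m * (T'/2^m) := by field_simp
        have h2 := Nat.floor_le_floor h1
        rw [Nat.floor_natCast] at h2
        exact Nat.lt_succ_of_le h2
      have hlow : ∀ m, s - T'/2^m ≤ (jm m : ℝ) * (T'/2^m) := by
        intro m
        have h3 : s / (T'/2^m) < (jm m : ℝ) + 1 := Nat.lt_floor_add_one (s / (T'/2^m))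
        have h4 : s < ((jm m : ℝ) + 1) * (T'/2^m) := by
          rw [div_lt_iff₀ (hδm m)] at h3
          linarith
        nlinarith [(hδm m).le]
      have hupp : ∀ m, (jm m : ℝ) * (T'/2^m) ≤ s := by
        intro m
        have h1 : (jm m : ℝ) ≤ s / (T'/2^m) :=
          Nat.floor_le (div_nonneg hs.1 (hδm m).le)
        rw [← le_div_iff₀ (hδm m)]
        exact h1
      have htend0 : Tendsto (fun m : ℕ => T'/2^m) atTop (𝓝 0) := by
        have h1 : Tendsto (fun m : ℕ => ((1:ℝ)/2) ^ m) atTop (𝓝 0) :=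
          tendsto_pow_atTop_nhds_zero_of_lt_one (by norm_num) (by norm_num)
        have h2 := h1.const_mul T'
        rw [mul_zero] at h2
        convert h2 using 2 with m
        rw [div_pow, one_pow]
        ring
      have hlim : Tendsto (fun m => (jm m : ℝ) * (T'/2^m)) atTop (𝓝 s) := by
        have hgl : Tendsto (fun m : ℕ => s - T'/2^m) atTop (𝓝 (s - 0)) :=
          tendsto_const_nhds.sub htend0
        rw [sub_zero] at hgl
        exact tendsto_of_tendsto_of_tendsto_of_le_of_le hgl tendsto_const_nhds hlow hupp
      have hinf : Tendsto (fun m => Metric.infDist (B ((jm m : ℝ) * (T'/2^m)) ω) K) atTop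
          (𝓝 (Metric.infDist (B s ω) K)) := by
        have hfc : Continuous fun u => Metric.infDist (B u ω) K :=
          (Metric.continuous_infDist_pt K).comp (hcont ω)
        exact (hfc.tendsto s).comp hlim
      have hge : (1:ℝ)/(n+1) ≤ Metric.infDist (B s ω) K := by
        apply ge_of_tendsto' hinf
        intro m
        have := hn m ⟨jm m, hjle m⟩
        simpa using this
      have h0 : Metric.infDist (B s ω) K = 0 := Metric.infDist_zero_of_mem hsK
      rw [h0] at hge
      have : (0:ℝ) < 1/(n+1) := by positivity
      linarith
  have hEmeas : MeasurableSet[mAsup ⊔ Gim] {ω | ∀ s ∈ Set.Icc (0:ℝ) T', B s ω ∉ K} := by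
    rw [hErep]
    exact MeasurableSet.iUnion fun n => MeasurableSet.iInter fun m => hGrmeas n m
  exact (Indep_iff _ _ _).mp hfinal _ _ hEmeas hZev

end PastAux

section LawAux

open Topology

variable {Ω : Type} [m0 : MeasurableSpace Ω] {μ : Measure Ω} {B : ℝ → Ω → ℂ}

/-- gaussian bound for the increment of the real part -/
lemma increment_law_aux (hB : IsPlanarBM μ B)
    {T' T : ℝ} (hT'0 : 0 ≤ T') (hTT : T' < T) (c : ℝ) :
    μ {ω | |(B T ω - B T' ω).re| < c}
      ≤ ENNReal.ofReal ((Real.sqrt (2 * Real.pi * (T - T')))⁻¹ * (2 * c)) := by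
  have hmap := hB.1.2.2.2.1 T' T hT'0 hTT.le
  have hZmeas : Measurable fun ω => (fun t ω => (B t ω - B 0 ω).re) T ω
      - (fun t ω => (B t ω - B 0 ω).re) T' ω := (hB.1.1 T).sub (hB.1.1 T')
  have hev : {ω | |(B T ω - B T' ω).re| < c}
      = (fun ω => (fun t ω => (B t ω - B 0 ω).re) T ω
          - (fun t ω => (B t ω - B 0 ω).re) T' ω) ⁻¹' (Set.Ioo (-c) c) := by
    ext ω
    simp only [Set.mem_setOf_eq, Set.mem_preimage, Set.mem_Ioo, abs_lt, Complex.sub_re]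
    constructor <;> intro h <;> constructor <;> linarith [h.1, h.2]
  rw [hev, ← Measure.map_apply hZmeas measurableSet_Ioo, hmap]
  have hvne : (T - T').toNNReal ≠ 0 := by
    simp only [ne_eq, Real.toNNReal_eq_zero, not_le]
    linarith
  have hb := gaussian_interval_aux hvne c
  rwa [Real.coe_toNNReal _ (by linarith)] at hb

end LawAux

open Topology

/-- Beurling-type estimate at fixed times: assuming the Beurling projection estimate at
the exit time `σ_t = inf{s : |B_s| = √t}`, there is a constant `c` such that for any
continuous curve `γ` with `|γ(0)| = r` and `|γ(t)| → ∞`, and any start `z` with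
`|z| ≤ r`, a planar Brownian motion from `z` satisfies
`P^z{B[0,t] ∩ γ[0,∞) = ∅} ≤ c (r/√t)^{1/2}`. -/
theorem stmt11
    (hBeurling : ∃ c₀ : ℝ, 0 < c₀ ∧
      ∀ (Ω : Type) (_ : MeasurableSpace Ω) (μ : Measure Ω), IsProbabilityMeasure μ →
        ∀ (B : ℝ → Ω → ℂ) (z : ℂ) (r t : ℝ) (γ : ℝ → ℂ),
          IsPlanarBM μ B → (∀ ω, B 0 ω = z) → 0 < r → ‖z‖ ≤ r → 0 < t →
          Continuous γ → ‖γ 0‖ = r →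
          Filter.Tendsto (fun s => ‖γ s‖) Filter.atTop Filter.atTop →
          (μ {ω | ∀ s ∈ Set.Icc 0 (sigmaT B t ω), B s ω ∉ Set.range γ}).toReal
            ≤ c₀ * Real.sqrt (r / Real.sqrt t)) :
    ∃ c : ℝ, 0 < c ∧
      ∀ (Ω : Type) (_ : MeasurableSpace Ω) (μ : Measure Ω), IsProbabilityMeasure μ →
        ∀ (B : ℝ → Ω → ℂ) (z : ℂ) (r t : ℝ) (γ : ℝ → ℂ),
          IsPlanarBM μ B → (∀ ω, B 0 ω = z) → 0 < r → ‖z‖ ≤ r → 0 < t →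
          Continuous γ → ‖γ 0‖ = r →
          Filter.Tendsto (fun s => ‖γ s‖) Filter.atTop Filter.atTop →
          (μ {ω | ∀ s ∈ Set.Icc 0 t, B s ω ∉ Set.range γ}).toReal
            ≤ c * Real.sqrt (r / Real.sqrt t) := by
  obtain ⟨c₀, hc₀, hbeu⟩ := hBeurling
  refine ⟨10 * c₀, by positivity, ?_⟩
  intro Ω mΩ μ hprob B z r t γ hBM hB0 hr hzr ht hγc hγ0 hgi
  haveI := hprob
  have hrhs0 : 0 ≤ 10 * c₀ * Real.sqrt (r / Real.sqrt t) := by positivity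
  by_cases hz : γ 0 = z
  · have he : {ω | ∀ s ∈ Set.Icc (0:ℝ) t, B s ω ∉ Set.range γ} = ∅ := by
      apply Set.eq_empty_iff_forall_notMem.mpr
      intro ω hω
      exact hω 0 ⟨le_rfl, ht.le⟩ ⟨0, hz.trans (hB0 ω).symm⟩
    rw [he]
    simpa using hrhs0
  -- main case
  set γ' : ℝ → ℂ := fun s => γ (max s 0) with hγ'
  set K : Set ℂ := Set.range γ' with hKdef
  have hKcl : IsClosed K := closed_range_aux hγc hgi
  have hKne : K.Nonempty := ⟨γ' 0, Set.mem_range_self 0⟩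
  have hKsub : K ⊆ Set.range γ := by rintro w ⟨s, rfl⟩; exact ⟨max s 0, rfl⟩
  set x : ℝ := r / Real.sqrt t with hx
  have hst : 0 < Real.sqrt t := Real.sqrt_pos.mpr ht
  have hxnn : 0 ≤ x := by positivity
  set E : ℕ → Set Ω := fun k => {ω | ∀ s ∈ Set.Icc (0:ℝ) (t / 2^k), B s ω ∉ K} with hE
  set H : ℕ → ℝ := fun k => (μ (E k)).toReal with hH
  have htk : ∀ k : ℕ, (0:ℝ) < t / 2^k := fun k => by positivity
  set rt : ℝ := ‖γ 0 - z‖ with hrt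
  have hrtpos : 0 < rt := by
    rw [hrt]
    exact norm_pos_iff.mpr (sub_ne_zero.mpr hz)
  have hrt2r : rt ≤ 2 * r := by
    have h1 := norm_sub_le_norm_sub_add_norm_sub (γ 0) 0 z
    simp only [sub_zero, zero_sub, norm_neg] at h1
    rw [hrt, hγ0] at *
    linarith
  -- the recursion step
  have hrec : ∀ k : ℕ, H k ≤ c₀ * (3 * (6/5)^k * Real.sqrt x) + (4/7) * H (k+1) := by
    intro k
    set T : ℝ := t / 2^k with hT
    set T' : ℝ := t / 2^(k+1) with hT'
    have hTpos : 0 < T := htk k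
    have hT'pos : 0 < T' := htk (k+1)
    have hT'T : T' < T := by
      rw [hT, hT', div_lt_div_iff₀ (by positivity) (by positivity)]
      have h2 : (2:ℝ)^(k+1) = 2*2^k := by ring
      rw [h2]
      nlinarith [htk k, pow_pos (by norm_num : (0:ℝ) < 2) k, ht]
    set ρ : ℝ := Real.sqrt T / 4 with hρ
    have hρpos : 0 < ρ := by
      rw [hρ]
      have := Real.sqrt_pos.mpr hTpos
      positivity
    have hsqrt16 : Real.sqrt (T/16) = ρ := by
      rw [hρ, show T/16 = T * (1/16) by ring, Real.sqrt_mul hTpos.le,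
        show (1/16:ℝ) = (1/4)^2 by norm_num, Real.sqrt_sq (by norm_num)]
      ring
    -- the shifted Brownian motion and curve
    set B' : ℝ → Ω → ℂ := fun s ω => B s ω - z with hB'
    set γ'' : ℝ → ℂ := fun s => γ' s - z with hγ''
    have hB'BM : IsPlanarBM μ B' := by
      have hkey' : ∀ (u : ℝ) (ω : Ω), B' u ω - B' 0 ω = B u ω - B 0 ω := by
        intro u ω
        rw [hB']
        ring
      unfold IsPlanarBM at hBM ⊢
      have e1 : (fun (t : ℝ) (ω : Ω) => (B' t ω - B' 0 ω).re)
          = fun t ω => (B t ω - B 0 ω).re := by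
        funext u ω; rw [hkey' u ω]
      have e2 : (fun (t : ℝ) (ω : Ω) => (B' t ω - B' 0 ω).im)
          = fun t ω => (B t ω - B 0 ω).im := by
        funext u ω; rw [hkey' u ω]
      refine ⟨?_, ?_, ?_⟩
      · rw [e1]; exact hBM.1
      · rw [e2]; exact hBM.2.1
      · have e1' : ∀ u : ℝ, (fun ω => (B' u ω - B' 0 ω).re) = fun ω => (B u ω - B 0 ω).re := by
          intro u; funext ω; rw [hkey' u ω]
        have e2' : ∀ u : ℝ, (fun ω => (B' u ω - B' 0 ω).im) = fun ω => (B u ω - B 0 ω).im := by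
          intro u; funext ω; rw [hkey' u ω]
        simp only [e1', e2']
        exact hBM.2.2
    have hB'0 : ∀ ω, B' 0 ω = 0 := by
      intro ω
      show B 0 ω - z = 0
      rw [hB0 ω]; ring
    have hγ''c : Continuous γ'' := by
      rw [hγ'', hγ']
      exact (hγc.comp (continuous_id.max continuous_const)).sub continuous_const
    have hγ''0 : ‖γ'' 0‖ = rt := by
      rw [hγ'', hγ', hrt]
      simp
    have hgi2 : Filter.Tendsto (fun s => ‖γ'' s‖) Filter.atTop Filter.atTop := by
      apply Filter.tendsto_atTop_mono' _ _
        (show Filter.Tendsto (fun s => ‖γ s‖ - ‖z‖)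
          Filter.atTop Filter.atTop from ?_)
      · filter_upwards [Filter.eventually_ge_atTop (0:ℝ)] with s hs
        have hms : max s 0 = s := max_eq_left hs
        have h1 := norm_sub_le_norm_sub_add_norm_sub (γ s) z 0
        have h2 : ‖γ'' s‖ = ‖γ s - z‖ := by
          show ‖γ (max s 0) - z‖ = _
          rw [hms]
        simp only [sub_zero] at h1
        rw [h2]
        linarith
      · have := Filter.tendsto_atTop_add_const_right Filter.atTop (-(‖z‖)) hgi
        simpa [sub_eq_add_neg] using this
    -- Beurling estimate at this scale
    have hbeuk := hbeu Ω mΩ μ hprob B' 0 rt (T/16) γ'' hB'BM hB'0 hrtpos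
      (by rw [norm_zero]; exact hrtpos.le) (by positivity) hγ''c hγ''0 hgi2
    -- the case-A inclusion
    set caseA : Set Ω := {ω | ∃ s, s ∈ Set.Icc (0:ℝ) T ∧ ‖B s ω - z‖ = ρ}
      with hcaseA
    set Zev : Set Ω := {ω | |(B T ω - B T' ω).re| < 2*ρ} with hZev
    have hAsub : E k ∩ caseA
        ⊆ {ω | ∀ s ∈ Set.Icc 0 (sigmaT B' (T/16) ω), B' s ω ∉ Set.range γ''} := by
      rintro ω ⟨hEω, s, hsmem, habs⟩ u hu
      have hσle : sigmaT B' (T/16) ω ≤ s := by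
        apply csInf_le ⟨0, fun y hy => hy.1⟩
        refine ⟨hsmem.1, ?_⟩
        show ‖B s ω - z‖ = Real.sqrt (T/16)
        rw [hsqrt16]
        exact habs
      have huT : u ∈ Set.Icc (0:ℝ) T := ⟨hu.1, le_trans (le_trans hu.2 hσle) hsmem.2⟩
      rintro ⟨w, hw⟩
      apply hEω u huT
      refine ⟨w, ?_⟩
      have : γ' w - z = B u ω - z := hw
      linear_combination (norm := module) this
    have hsplit : E k ⊆ (E k ∩ caseA) ∪ (E (k+1) ∩ Zev) := by
      intro ω hω
      by_cases hc : ω ∈ caseA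
      · exact Or.inl ⟨hω, hc⟩
      · refine Or.inr ⟨?_, ?_⟩
        · intro s hs
          exact hω s ⟨hs.1, hs.2.trans hT'T.le⟩
        · have hlt : ∀ s ∈ Set.Icc (0:ℝ) T, ‖B s ω - z‖ < ρ := by
            intro s hs
            rcases lt_or_ge (‖B s ω - z‖) ρ with h | h
            · exact h
            · exfalso
              have hf : ContinuousOn (fun u => ‖B u ω - z‖) (Set.Icc 0 s) :=
                (continuous_norm.comp
                  ((path_cont_aux hBM hB0 ω).sub continuous_const)).continuousOn
              have hmem2 : ρ ∈ Set.Icc (‖B 0 ω - z‖) (‖B s ω - z‖) := by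
                constructor
                · rw [hB0 ω]
                  simp only [sub_self, norm_zero]
                  exact hρpos.le
                · exact h
              obtain ⟨u, hu, huval⟩ := intermediate_value_Icc hs.1 hf hmem2
              exact hc ⟨u, ⟨hu.1, hu.2.trans hs.2⟩, huval⟩
          have h1 := hlt T ⟨hTpos.le, le_rfl⟩
          have h2 := hlt T' ⟨hT'pos.le, hT'T.le⟩
          show |(B T ω - B T' ω).re| < 2*ρ
          calc |(B T ω - B T' ω).re| ≤ ‖B T ω - B T' ω‖ :=
                Complex.abs_re_le_norm _
            _ ≤ ‖B T ω - z‖ + ‖z - B T' ω‖ :=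
                norm_sub_le_norm_sub_add_norm_sub _ _ _
            _ = ‖B T ω - z‖ + ‖B T' ω - z‖ := by
                rw [norm_sub_rev z (B T' ω)]
            _ < ρ + ρ := add_lt_add h1 h2
            _ = 2 * ρ := by ring
    -- measure bookkeeping
    have hmeasure : μ (E k) ≤ μ (E k ∩ caseA) + μ (E (k+1) ∩ Zev) :=
      (measure_mono hsplit).trans (measure_union_le _ _)
    have hip : μ (E (k+1) ∩ Zev) = μ (E (k+1)) * μ Zev :=
      indep_past_aux hBM hB0 hKcl hKne hT'pos hT'T (2*ρ)
    have hlawk : μ Zev ≤ ENNReal.ofReal (4/7) := by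
      have h0 := increment_law_aux hBM hT'pos.le hT'T (2*ρ)
      apply h0.trans
      apply ENNReal.ofReal_le_ofReal
      have hTT' : T - T' = t / 2^(k+1) := by
        rw [hT, hT']
        field_simp
        ring
      have he2 : 2 * Real.pi * (T - T') = Real.pi * T := by
        rw [hTT', hT]
        field_simp
        ring
      rw [he2]
      have hsπ : Real.sqrt (Real.pi * T) = Real.sqrt Real.pi * Real.sqrt T :=
        Real.sqrt_mul Real.pi_pos.le _
      have h4ρ : 2 * (2 * ρ) = Real.sqrt T := by rw [hρ]; ring
      rw [hsπ, h4ρ, mul_inv]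
      have hsT : Real.sqrt T ≠ 0 := (Real.sqrt_pos.mpr hTpos).ne'
      have hπ74 : (7/4 : ℝ) ≤ Real.sqrt Real.pi := by
        rw [show (7/4:ℝ) = Real.sqrt ((7/4)^2) from (Real.sqrt_sq (by norm_num)).symm]
        apply Real.sqrt_le_sqrt
        nlinarith [Real.pi_gt_d6]
      calc (Real.sqrt Real.pi)⁻¹ * (Real.sqrt T)⁻¹ * Real.sqrt T
          = (Real.sqrt Real.pi)⁻¹ := by
            field_simp
        _ ≤ (7/4:ℝ)⁻¹ := by
            apply inv_anti₀ (by norm_num) hπ74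
        _ ≤ 4/7 := by norm_num
    -- the Beurling term bound
    have hbeubd : (μ (E k ∩ caseA)).toReal ≤ c₀ * (3 * (6/5)^k * Real.sqrt x) := by
      have h1 : (μ (E k ∩ caseA)).toReal
          ≤ (μ {ω | ∀ s ∈ Set.Icc 0 (sigmaT B' (T/16) ω), B' s ω ∉ Set.range γ''}).toReal :=
        ENNReal.toReal_mono (measure_ne_top μ _) (measure_mono hAsub)
      have hs2k : (0:ℝ) < Real.sqrt (2^k) :=
        Real.sqrt_pos.mpr (by positivity)
      have hsT2 : Real.sqrt T = Real.sqrt t / Real.sqrt (2^k) := by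
        rw [hT]
        exact Real.sqrt_div ht.le _
      have hcalc : rt / Real.sqrt (T/16) ≤ 8 * (x * Real.sqrt (2^k)) := by
        rw [hsqrt16]
        have e1 : rt / (Real.sqrt T / 4) = (4*rt) * (Real.sqrt (2^k) / Real.sqrt t) := by
          rw [hsT2]
          field_simp
        have e2 : (8:ℝ) * (x * Real.sqrt (2^k)) = (8*r) * (Real.sqrt (2^k) / Real.sqrt t) := by
          rw [hx]
          field_simp
        rw [e1, e2]
        apply mul_le_mul_of_nonneg_right (by linarith) (by positivity)
      have h82 : Real.sqrt 8 ≤ 3 := by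
        rw [show (3:ℝ) = Real.sqrt (3^2) from (Real.sqrt_sq (by norm_num)).symm]
        apply Real.sqrt_le_sqrt
        norm_num
      have h83 : Real.sqrt (Real.sqrt ((2:ℝ)^k)) ≤ (6/5)^k := by
        have hb : (2:ℝ)^k ≤ ((6/5:ℝ)^k)^4 := by
          rw [← pow_mul, mul_comm k 4, pow_mul]
          apply pow_le_pow_left₀ (by norm_num) (by norm_num)
        calc Real.sqrt (Real.sqrt ((2:ℝ)^k))
            ≤ Real.sqrt (Real.sqrt (((6/5:ℝ)^k)^4)) :=
              Real.sqrt_le_sqrt (Real.sqrt_le_sqrt hb)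
          _ = (6/5)^k := by
              rw [show ((6/5:ℝ)^k)^4 = (((6/5:ℝ)^k)^2)^2 by ring,
                Real.sqrt_sq (by positivity), Real.sqrt_sq (by positivity)]
      have hchain : Real.sqrt (rt / Real.sqrt (T/16)) ≤ 3 * (6/5)^k * Real.sqrt x := by
        calc Real.sqrt (rt / Real.sqrt (T/16))
            ≤ Real.sqrt (8 * (x * Real.sqrt (2^k))) := Real.sqrt_le_sqrt hcalc
          _ = Real.sqrt 8 * (Real.sqrt x * Real.sqrt (Real.sqrt ((2:ℝ)^k))) := by
              rw [Real.sqrt_mul (by norm_num), Real.sqrt_mul hxnn]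
          _ ≤ 3 * (Real.sqrt x * (6/5)^k) := by
              apply mul_le_mul h82
                (mul_le_mul_of_nonneg_left h83 (Real.sqrt_nonneg _))
                (by positivity) (by norm_num)
          _ = 3 * (6/5)^k * Real.sqrt x := by ring
      exact h1.trans (hbeuk.trans (mul_le_mul_of_nonneg_left hchain hc₀.le))
    -- assemble
    have hZfin : μ (E (k+1) ∩ Zev) ≠ ⊤ := measure_ne_top μ _
    have hfin2 : μ (E k ∩ caseA) + μ (E (k+1) ∩ Zev) ≠ ⊤ :=
      ENNReal.add_ne_top.mpr ⟨measure_ne_top μ _, measure_ne_top μ _⟩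
    have hZtoReal : (μ Zev).toReal ≤ 4/7 := by
      have := ENNReal.toReal_mono ENNReal.ofReal_ne_top hlawk
      rwa [ENNReal.toReal_ofReal (by norm_num)] at this
    calc H k ≤ ((μ (E k ∩ caseA)) + μ (E (k+1) ∩ Zev)).toReal :=
          ENNReal.toReal_mono hfin2 hmeasure
      _ = (μ (E k ∩ caseA)).toReal + (μ (E (k+1) ∩ Zev)).toReal :=
          ENNReal.toReal_add (measure_ne_top μ _) (measure_ne_top μ _)
      _ = (μ (E k ∩ caseA)).toReal + (μ (E (k+1))).toReal * (μ Zev).toReal := by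
          rw [hip, ENNReal.toReal_mul]
      _ ≤ c₀ * (3 * (6/5)^k * Real.sqrt x) + (4/7) * H (k+1) := by
          apply add_le_add hbeubd
          rw [hH]
          rw [mul_comm ((4:ℝ)/7) _]
          apply mul_le_mul_of_nonneg_left hZtoReal ENNReal.toReal_nonneg
  -- unroll the recursion
  have hH1 : ∀ k, H k ≤ 1 := by
    intro k
    rw [hH]
    calc (μ (E k)).toReal ≤ (μ Set.univ).toReal :=
          ENNReal.toReal_mono (measure_ne_top μ _) (measure_mono (Set.subset_univ _))
      _ = 1 := by simp
  have hHnn : ∀ k, 0 ≤ H k := fun k => ENNReal.toReal_nonneg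
  have hunroll : ∀ N : ℕ, H 0 ≤ (3 * c₀ * Real.sqrt x) * (∑ k ∈ Finset.range N, (24/35:ℝ)^k)
      + (4/7:ℝ)^N * H N := by
    intro N
    induction N with
    | zero => simp
    | succ N ih =>
      have hstep := hrec N
      have hpow : (0:ℝ) ≤ (4/7:ℝ)^N := by positivity
      calc H 0 ≤ (3 * c₀ * Real.sqrt x) * (∑ k ∈ Finset.range N, (24/35:ℝ)^k)
            + (4/7:ℝ)^N * H N := ih
        _ ≤ (3 * c₀ * Real.sqrt x) * (∑ k ∈ Finset.range N, (24/35:ℝ)^k)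
            + (4/7:ℝ)^N * (c₀ * (3 * (6/5)^N * Real.sqrt x) + (4/7) * H (N+1)) := by
            have := mul_le_mul_of_nonneg_left hstep hpow
            linarith
        _ = (3 * c₀ * Real.sqrt x) * (∑ k ∈ Finset.range (N+1), (24/35:ℝ)^k)
            + (4/7:ℝ)^(N+1) * H (N+1) := by
            rw [Finset.sum_range_succ]
            have hq : ((4:ℝ)/7)^N * (6/5)^N = (24/35:ℝ)^N := by
              rw [← mul_pow]
              norm_num
            linear_combination (3 * c₀ * Real.sqrt x) * hq
  have hsum : ∀ N : ℕ, (∑ k ∈ Finset.range N, (24/35:ℝ)^k) ≤ 35/11 := by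
    intro N
    have hgeom := geom_sum_eq (by norm_num : (24/35:ℝ) ≠ 1) N
    rw [hgeom]
    have hp1 : (0:ℝ) ≤ (24/35:ℝ)^N := by positivity
    have hp2 : (24/35:ℝ)^N ≤ 1 := pow_le_one₀ (by norm_num) (by norm_num)
    rw [div_le_iff_of_neg (by norm_num : (24/35:ℝ) - 1 < 0)]
    nlinarith
  have hbound : ∀ N : ℕ, H 0 ≤ (3 * c₀ * Real.sqrt x) * (35/11) + (4/7:ℝ)^N := by
    intro N
    calc H 0 ≤ (3 * c₀ * Real.sqrt x) * (∑ k ∈ Finset.range N, (24/35:ℝ)^k)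
          + (4/7:ℝ)^N * H N := hunroll N
      _ ≤ (3 * c₀ * Real.sqrt x) * (35/11) + (4/7:ℝ)^N * 1 := by
          apply add_le_add
          · exact mul_le_mul_of_nonneg_left (hsum N) (by positivity)
          · exact mul_le_mul_of_nonneg_left (hH1 N) (by positivity)
      _ = (3 * c₀ * Real.sqrt x) * (35/11) + (4/7:ℝ)^N := by ring
  have hlim : Filter.Tendsto (fun N : ℕ => (3 * c₀ * Real.sqrt x) * (35/11) + (4/7:ℝ)^N)
      Filter.atTop (𝓝 ((3 * c₀ * Real.sqrt x) * (35/11) + 0)) :=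
    tendsto_const_nhds.add
      (tendsto_pow_atTop_nhds_zero_of_lt_one (by norm_num) (by norm_num))
  have hfinal : H 0 ≤ (3 * c₀ * Real.sqrt x) * (35/11) := by
    have := ge_of_tendsto' hlim hbound
    linarith
  -- conclude
  have hsub : {ω | ∀ s ∈ Set.Icc (0:ℝ) t, B s ω ∉ Set.range γ} ⊆ E 0 := by
    intro ω hω s hs hmem
    exact hω s (by simpa using hs) (hKsub hmem)
  calc (μ {ω | ∀ s ∈ Set.Icc (0:ℝ) t, B s ω ∉ Set.range γ}).toReal
      ≤ H 0 := ENNReal.toReal_mono (measure_ne_top μ _) (measure_mono hsub)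
    _ ≤ (3 * c₀ * Real.sqrt x) * (35/11) := hfinal
    _ ≤ 10 * c₀ * Real.sqrt (r / Real.sqrt t) := by
        rw [hx]
        nlinarith [Real.sqrt_nonneg (r / Real.sqrt t), hc₀]
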